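/- Let (X,p) be a complete partial metric space, α ∈ [0,1), and T : X → X a mapping such that for all x, y ∈ X, p(Tx,Ty) ≤ max{α·p(x,y), p(x,x), p(y,y)}. Let ρ_p = inf{p(x,y) : x, y ∈ X} and X_p = {x ∈ X : p(x,x) = ρ_p}. Then: (1) X_p is nonempty; (2) there is a unique u ∈ X_p such that Tu = u; (3) for each x ∈ X_p the sequence (Tⁿx)_{n≥1} converges to u with respect to the induced metric p^s, i.e. lim_{n→∞} p^s(Tⁿx, u) = 0. -/

import Mathlib

open Filter Topology

/-- A partial metric on a type `X`. -/
structure IsPartialMetric {X : Type*} (p : X → X → ℝ) : Prop where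
  nonneg : ∀ x y, 0 ≤ p x y
  symm : ∀ x y, p x y = p y x
  eq_of : ∀ x y, p x x = p x y → p x y = p y y → x = y
  self_le : ∀ x y, p x x ≤ p x y
  triangle : ∀ x y z, p x z + p y y ≤ p x y + p y z

/-- A sequence `x` converges to `a` in the partial metric `p`:
`lim_{n→∞} p(a, x n) = p(a,a)`. -/
def PConverges {X : Type*} (p : X → X → ℝ) (x : ℕ → X) (a : X) : Prop :=
  Tendsto (fun n => p a (x n)) atTop (𝓝 (p a a))

/-- A sequence is `0`-Cauchy: `lim_{m,n→∞} p(x n, x m) = 0`. -/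
def PZeroCauchy {X : Type*} (p : X → X → ℝ) (x : ℕ → X) : Prop :=
  Tendsto (fun mn : ℕ × ℕ => p (x mn.1) (x mn.2)) atTop (𝓝 0)

/-- `(X,p)` is `0`-complete. -/
def PZeroComplete {X : Type*} (p : X → X → ℝ) : Prop :=
  ∀ x : ℕ → X, PZeroCauchy p x → ∃ a, PConverges p x a ∧ p a a = 0

/-- A set is sequentially closed with respect to `p`-convergence. -/
def SeqClosed {X : Type*} (p : X → X → ℝ) (A : Set X) : Prop :=
  ∀ (x : ℕ → X) (a : X), (∀ n, x n ∈ A) → PConverges p x a → a ∈ A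

/-- A sequence is Cauchy in `(X,p)`: the double limit `lim_{m,n→∞} p(x n, x m)`
exists (finite). -/
def PCauchy {X : Type*} (p : X → X → ℝ) (x : ℕ → X) : Prop :=
  ∃ L : ℝ, Tendsto (fun mn : ℕ × ℕ => p (x mn.1) (x mn.2)) atTop (𝓝 L)

/-- `(X,p)` is complete: every Cauchy sequence converges to some `a` with
`p(a,a) = lim_{m,n→∞} p(x n, x m)`. -/
def PComplete {X : Type*} (p : X → X → ℝ) : Prop :=
  ∀ x : ℕ → X, PCauchy p x → ∃ a, PConverges p x a ∧
    Tendsto (fun mn : ℕ × ℕ => p (x mn.1) (x mn.2)) atTop (𝓝 (p a a))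

/-- Continuity of `T : X → X` with respect to the open `p`-balls. -/
def PMContinuous {X : Type*} (p : X → X → ℝ) (T : X → X) : Prop :=
  ∀ x₀ : X, ∀ ε > (0:ℝ), ∃ δ > (0:ℝ), ∀ y,
    p x₀ y < p x₀ x₀ + δ → p (T x₀) (T y) < p (T x₀) (T x₀) + ε

/-- A set `A` is `0`-compact: every sequence in `A` has a subsequence converging
to some `a ∈ A` with `lim_{n→∞} p(x (k n), a) = p(a,a) = 0`. -/
def PZeroCompact {X : Type*} (p : X → X → ℝ) (A : Set X) : Prop :=
  ∀ x : ℕ → X, (∀ n, x n ∈ A) → ∃ (k : ℕ → ℕ) (a : X), StrictMono k ∧ a ∈ A ∧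
    Tendsto (fun n => p (x (k n)) a) atTop (𝓝 (p a a)) ∧ p a a = 0

section
variable {X : Type*} {p : X → X → ℝ} {T : X → X} {α : ℝ}

lemma ipr_step (hp : IsPartialMetric p) (hα0 : 0 ≤ α) (hα1 : α < 1)
    (hcontr : ∀ x y, p (T x) (T y) ≤ max (α * p x y) (max (p x x) (p y y))) :
    ∀ (n : ℕ) (x y : X), p (T^[n] x) (T^[n] y) ≤ max (α^n * p x y) (max (p x x) (p y y)) := by
  intro n
  induction n with
  | zero => intro x y; simp
  | succ n ih =>
    intro x y
    rw [Function.iterate_succ_apply', Function.iterate_succ_apply']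
    refine (hcontr _ _).trans ?_
    have hdx : p (T^[n] x) (T^[n] x) ≤ p x x := by
      have h1 : α ^ n * p x x ≤ p x x :=
        mul_le_of_le_one_left (hp.nonneg x x) (pow_le_one₀ hα0 hα1.le)
      simpa [max_self, max_eq_right h1] using ih x x
    have hdy : p (T^[n] y) (T^[n] y) ≤ p y y := by
      have h1 : α ^ n * p y y ≤ p y y :=
        mul_le_of_le_one_left (hp.nonneg y y) (pow_le_one₀ hα0 hα1.le)
      simpa [max_self, max_eq_right h1] using ih y y
    have h2 : α * p (T^[n] x) (T^[n] y) ≤ max (α^(n+1) * p x y) (max (p x x) (p y y)) := by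
      have h1 : α * p (T^[n] x) (T^[n] y) ≤ α * max (α^n * p x y) (max (p x x) (p y y)) :=
        mul_le_mul_of_nonneg_left (ih x y) hα0
      refine h1.trans ?_
      rw [mul_max_of_nonneg _ _ hα0]
      apply max_le_max
      · exact le_of_eq (by ring)
      · exact mul_le_of_le_one_left (le_max_of_le_left (hp.nonneg x x)) hα1.le
    exact max_le h2 (max_le ((hdx.trans (le_max_left _ _)).trans (le_max_right _ _))
      ((hdy.trans (le_max_right _ _)).trans (le_max_right _ _)))

lemma ipr_diag_le (hp : IsPartialMetric p) (hα0 : 0 ≤ α) (hα1 : α < 1)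
    (hcontr : ∀ x y, p (T x) (T y) ≤ max (α * p x y) (max (p x x) (p y y)))
    (n : ℕ) (x : X) : p (T^[n] x) (T^[n] x) ≤ p x x := by
  have h1 : α ^ n * p x x ≤ p x x :=
    mul_le_of_le_one_left (hp.nonneg x x) (pow_le_one₀ hα0 hα1.le)
  simpa [max_self, max_eq_right h1] using ipr_step hp hα0 hα1 hcontr n x x

lemma ipr_diag_antitone (hp : IsPartialMetric p) (hα1 : α < 1)
    (hcontr : ∀ x y, p (T x) (T y) ≤ max (α * p x y) (max (p x x) (p y y))) (x : X) :
    Antitone (fun n => p (T^[n] x) (T^[n] x)) := by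
  apply antitone_nat_of_succ_le
  intro n
  have h := hcontr (T^[n] x) (T^[n] x)
  have h2 : α * p (T^[n] x) (T^[n] x) ≤ p (T^[n] x) (T^[n] x) :=
    mul_le_of_le_one_left (hp.nonneg _ _) hα1.le
  simpa [Function.iterate_succ_apply', max_self, max_eq_right h2] using h

lemma ipr_bound (hp : IsPartialMetric p) (hα0 : 0 ≤ α) (hα1 : α < 1)
    (hcontr : ∀ x y, p (T x) (T y) ≤ max (α * p x y) (max (p x x) (p y y))) (x : X) :
    ∃ C : ℝ, 0 ≤ C ∧ ∀ i j, p (T^[i] x) (T^[j] x) ≤ C := by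
  set D := p x (T x) with hD
  set M := p x x with hM
  have hD0 : 0 ≤ D := hp.nonneg _ _
  have hM0 : 0 ≤ M := hp.nonneg _ _
  have h1α : 0 < 1 - α := by linarith
  refine ⟨(D + M) / (1 - α), by positivity, ?_⟩
  set C := (D + M) / (1 - α) with hC
  have hCeq : C * (1 - α) = D + M := div_mul_cancel₀ _ h1α.ne'
  have hMC : M ≤ C := by nlinarith
  have h0 : ∀ k, p x (T^[k] x) ≤ C := by
    intro k
    induction k with
    | zero => simpa using hMC
    | succ k ih =>
      have htri := hp.triangle x (T x) (T^[k+1] x)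
      have hc : p (T x) (T^[k+1] x) ≤ max (α * p x (T^[k] x)) (max M (p (T^[k] x) (T^[k] x))) := by
        rw [Function.iterate_succ_apply']
        exact hcontr x (T^[k] x)
      have hdk : p (T^[k] x) (T^[k] x) ≤ M := ipr_diag_le hp hα0 hα1 hcontr k x
      have h3 : p (T x) (T^[k+1] x) ≤ α * C + M := by
        refine hc.trans (max_le ?_ ?_)
        · nlinarith [mul_le_mul_of_nonneg_left ih hα0]
        · have : 0 ≤ α * C := by positivity
          exact max_le (by linarith) (by linarith)
      have hTx : 0 ≤ p (T x) (T x) := hp.nonneg _ _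
      nlinarith
  have h1 : ∀ i k, p (T^[i] x) (T^[i + k] x) ≤ C := by
    intro i k
    have : T^[i + k] x = T^[i] (T^[k] x) := by
      rw [add_comm, Function.iterate_add_apply]; rw [← Function.Commute.iterate_iterate_self]
    rw [this]
    refine (ipr_step hp hα0 hα1 hcontr i x (T^[k] x)).trans (max_le ?_ (max_le hMC ?_))
    · calc α ^ i * p x (T^[k] x) ≤ 1 * C :=
            mul_le_mul (pow_le_one₀ hα0 hα1.le) (h0 k) (hp.nonneg _ _) zero_le_one
        _ = C := one_mul C
    · exact (ipr_diag_le hp hα0 hα1 hcontr k x).trans hMC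
  intro i j
  rcases le_total i j with h | h
  · obtain ⟨k, rfl⟩ := Nat.exists_eq_add_of_le h
    exact h1 i k
  · obtain ⟨k, rfl⟩ := Nat.exists_eq_add_of_le h
    rw [hp.symm]
    exact h1 j k
end

section
variable {X : Type*} {p : X → X → ℝ} {T : X → X} {α : ℝ}

lemma ipr_orbit (hp : IsPartialMetric p) (hcomp : PComplete p) (hα0 : 0 ≤ α) (hα1 : α < 1)
    (hcontr : ∀ x y, p (T x) (T y) ≤ max (α * p x y) (max (p x x) (p y y))) (x : X) :
    ∃ z, PConverges p (fun n => T^[n] x) z ∧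
      Tendsto (fun n => p (T^[n] x) (T^[n] x)) atTop (𝓝 (p z z)) ∧
      p z z = ⨅ n, p (T^[n] x) (T^[n] x) := by
  set d : ℕ → ℝ := fun n => p (T^[n] x) (T^[n] x) with hd
  have hanti : Antitone d := ipr_diag_antitone hp hα1 hcontr x
  have hbdd : BddBelow (Set.range d) := ⟨0, by rintro r ⟨n, rfl⟩; exact hp.nonneg _ _⟩
  set c := ⨅ n, d n with hc
  have hdc : Tendsto d atTop (𝓝 c) := tendsto_atTop_ciInf hanti hbdd
  have hc0 : 0 ≤ c := le_ciInf fun n => hp.nonneg _ _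
  have hcle : ∀ n, c ≤ d n := fun n => ciInf_le hbdd n
  obtain ⟨C, hC0, hCb⟩ := ipr_bound hp hα0 hα1 hcontr x
  have key : Tendsto (fun mn : ℕ × ℕ => p (T^[mn.1] x) (T^[mn.2] x)) atTop (𝓝 c) := by
    rw [Metric.tendsto_atTop]
    intro ε hε
    obtain ⟨k, hk⟩ := (hdc.eventually_lt_const (by linarith : c < c + ε)).exists
    have hpow : Tendsto (fun j : ℕ => α ^ j * C) atTop (𝓝 0) := by
      simpa using (tendsto_pow_atTop_nhds_zero_of_lt_one hα0 hα1).mul_const C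
    obtain ⟨j0, hj0⟩ := eventually_atTop.mp
      (hpow.eventually_lt_const (by linarith : (0:ℝ) < c + ε))
    have hgen : ∀ a b : ℕ, p (T^[k + a] x) (T^[k + a + b] x) ≤ max (α ^ a * C) (d k) := by
      intro a b
      have e1 : T^[k + a] x = T^[a] (T^[k] x) := by
        rw [add_comm k a, Function.iterate_add_apply]
      have e2 : T^[k + a + b] x = T^[a] (T^[k + b] x) := by
        have e : k + a + b = a + (k + b) := by ring
        rw [e, Function.iterate_add_apply]
      rw [e1, e2]
      refine (ipr_step hp hα0 hα1 hcontr a (T^[k] x) (T^[k + b] x)).trans (max_le ?_ ?_)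
      · exact le_max_of_le_left
          (mul_le_mul_of_nonneg_left (hCb k (k + b)) (pow_nonneg hα0 a))
      · exact le_max_of_le_right (max_le le_rfl (hanti (Nat.le_add_right k b)))
    have hcase : ∀ n m : ℕ, k + j0 ≤ n → n ≤ m → p (T^[n] x) (T^[m] x) < c + ε := by
      intro n m h1 h2
      obtain ⟨a, rfl⟩ : ∃ a, n = k + a := ⟨n - k, by omega⟩
      obtain ⟨b, rfl⟩ : ∃ b, m = k + a + b := ⟨m - (k + a), by omega⟩
      exact lt_of_le_of_lt (hgen a b) (max_lt (hj0 a (by omega)) hk)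
    refine ⟨(k + j0, k + j0), ?_⟩
    rintro ⟨n, m⟩ hnm
    obtain ⟨h1, h2⟩ : k + j0 ≤ n ∧ k + j0 ≤ m := hnm
    have hlow : c ≤ p (T^[n] x) (T^[m] x) := (hcle n).trans (hp.self_le _ _)
    have hup : p (T^[n] x) (T^[m] x) < c + ε := by
      rcases le_total n m with h | h
      · exact hcase n m h1 h
      · rw [hp.symm]; exact hcase m n h2 h
    rw [Real.dist_eq, abs_lt]
    constructor <;> simp at hlow hup ⊢ <;> linarith
  obtain ⟨z, hconv, hdbl⟩ := hcomp (fun n => T^[n] x) ⟨c, key⟩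
  exact ⟨z, hconv, by rw [tendsto_nhds_unique hdbl key]; exact hdc,
    tendsto_nhds_unique hdbl key⟩
end

section
variable {X : Type*} {p : X → X → ℝ} {T : X → X} {α : ℝ}

lemma ipr_conv (hp : IsPartialMetric p) (hα0 : 0 ≤ α) (hα1 : α < 1)
    (hcontr : ∀ x y, p (T x) (T y) ≤ max (α * p x y) (max (p x x) (p y y)))
    {ρ : ℝ} (hρ0 : 0 ≤ ρ) (hρle : ∀ a b, ρ ≤ p a b)
    {u : X} (hu : T u = u) (huρ : p u u = ρ) {v : X} (hv : p v v = ρ) :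
    Tendsto (fun n => p (T^[n] v) u) atTop (𝓝 ρ) := by
  have hub : ∀ n, p (T^[n] v) u ≤ max (α ^ n * p v u) ρ := by
    intro n
    have h := ipr_step hp hα0 hα1 hcontr n v u
    rw [Function.iterate_fixed hu, hv, huρ, max_self] at h
    exact h
  have hup : Tendsto (fun n => max (α ^ n * p v u) ρ) atTop (𝓝 ρ) := by
    have h1 : Tendsto (fun n : ℕ => α ^ n * p v u) atTop (𝓝 0) := by
      simpa using (tendsto_pow_atTop_nhds_zero_of_lt_one hα0 hα1).mul_const (p v u)
    have h2 := h1.max (tendsto_const_nhds : Tendsto (fun _ : ℕ => ρ) atTop (𝓝 ρ))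
    simpa [max_eq_right hρ0] using h2
  exact tendsto_of_tendsto_of_tendsto_of_le_of_le tendsto_const_nhds hup
    (fun n => hρle _ _) hub

lemma ipr_fix (hp : IsPartialMetric p) (hcomp : PComplete p) (hα0 : 0 ≤ α) (hα1 : α < 1)
    (hcontr : ∀ x y, p (T x) (T y) ≤ max (α * p x y) (max (p x x) (p y y)))
    {ρ : ℝ} (hρ0 : 0 ≤ ρ) (hρle : ∀ a b, ρ ≤ p a b)
    {x : X} (hx : p x x = ρ) : ∃ z, T z = z ∧ p z z = ρ := by
  obtain ⟨z, hconv, hdiagt, hzinf⟩ := ipr_orbit hp hcomp hα0 hα1 hcontr x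
  have hdiag : ∀ n, p (T^[n] x) (T^[n] x) = ρ := fun n =>
    le_antisymm (hx ▸ ipr_diag_le hp hα0 hα1 hcontr n x) (hρle _ _)
  have hzz : p z z = ρ := by
    have h : Tendsto (fun n => p (T^[n] x) (T^[n] x)) atTop (𝓝 ρ) := by
      simp only [hdiag]; exact tendsto_const_nhds
    exact tendsto_nhds_unique hdiagt h
  have hconv' : Tendsto (fun n => p z (T^[n] x)) atTop (𝓝 ρ) := hzz ▸ hconv
  have h1 : p z (T z) ≤ ρ := by
    have hRHS : ∀ n : ℕ, p z (T z) ≤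
        p z (T^[n+1] x) + max (α * p z (T^[n] x)) ρ - ρ := by
      intro n
      have htri := hp.triangle z (T^[n+1] x) (T z)
      have hc : p (T^[n+1] x) (T z) ≤ max (α * p z (T^[n] x)) ρ := by
        rw [Function.iterate_succ_apply']
        have h := hcontr (T^[n] x) z
        rw [hdiag n, hzz, max_self, hp.symm (T^[n] x) z] at h
        exact h
      have hd := hdiag (n+1)
      linarith
    have hlim : Tendsto (fun n => p z (T^[n+1] x) + max (α * p z (T^[n] x)) ρ - ρ)
        atTop (𝓝 (ρ + ρ - ρ)) := by
      have ha : Tendsto (fun n => p z (T^[n+1] x)) atTop (𝓝 ρ) :=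
        hconv'.comp (tendsto_add_atTop_nat 1)
      have hb : Tendsto (fun n => max (α * p z (T^[n] x)) ρ) atTop (𝓝 ρ) := by
        have hm := (hconv'.const_mul α).max (tendsto_const_nhds : Tendsto (fun _ : ℕ => ρ) atTop (𝓝 ρ))
        have : max (α * ρ) ρ = ρ := max_eq_right (mul_le_of_le_one_left hρ0 hα1.le)
        rwa [this] at hm
      exact (ha.add hb).sub tendsto_const_nhds
    have := ge_of_tendsto hlim (Filter.Eventually.of_forall hRHS)
    linarith
  have h2 : p z (T z) = ρ := le_antisymm h1 (hρle _ _)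
  have h3 : p (T z) (T z) = ρ := by
    refine le_antisymm ?_ (hρle _ _)
    have := ipr_diag_le hp hα0 hα1 hcontr 1 z
    simpa [hzz] using this
  have heq := hp.eq_of z (T z) (by rw [hzz, h2]) (by rw [h2, h3])
  exact ⟨z, heq.symm, hzz⟩
end
/-- the generalized contraction principle of Ilić, Pavlović and
Rakočević on a complete partial metric space. -/
theorem ilic_pavlovic_rakocevic {X : Type*} [Nonempty X] (p : X → X → ℝ)
    (hp : IsPartialMetric p) (hcomp : PComplete p)
    (α : ℝ) (hα : α ∈ Set.Ico (0:ℝ) 1) (T : X → X)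
    (hcontr : ∀ x y, p (T x) (T y) ≤ max (α * p x y) (max (p x x) (p y y))) :
    (({x : X | p x x = sInf {r : ℝ | ∃ x y : X, r = p x y}} : Set X).Nonempty) ∧
    (∃ u ∈ {x : X | p x x = sInf {r : ℝ | ∃ x y : X, r = p x y}},
      T u = u ∧
      (∀ v ∈ {x : X | p x x = sInf {r : ℝ | ∃ x y : X, r = p x y}},
        T v = v → v = u) ∧
      (∀ x ∈ {x : X | p x x = sInf {r : ℝ | ∃ x y : X, r = p x y}},
        Tendsto (fun n =>
          2 * p (T^[n] x) u - p (T^[n] x) (T^[n] x) - p u u) atTop (𝓝 0))) := by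
  obtain ⟨hα0, hα1⟩ := hα
  set S := {r : ℝ | ∃ x y : X, r = p x y} with hS
  have hSne : S.Nonempty :=
    ⟨p (Classical.arbitrary X) (Classical.arbitrary X), Classical.arbitrary X,
      Classical.arbitrary X, rfl⟩
  have hSbdd : BddBelow S := ⟨0, by rintro r ⟨a, b, rfl⟩; exact hp.nonneg a b⟩
  set ρ := sInf S with hρ
  have hρle : ∀ a b : X, ρ ≤ p a b := fun a b => csInf_le hSbdd ⟨a, b, rfl⟩
  have hρ0 : 0 ≤ ρ := le_csInf hSne (by rintro r ⟨a, b, rfl⟩; exact hp.nonneg a b)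
  have hy0 : ∀ k : ℕ, ∃ y : X, p y y < ρ + 1 / (k + 1) := by
    intro k
    have hpos : (0:ℝ) < 1 / ((k:ℝ) + 1) := by positivity
    obtain ⟨r, hrS, hr⟩ := exists_lt_of_csInf_lt hSne
      (show sInf S < ρ + 1 / ((k:ℝ) + 1) by rw [← hρ]; linarith)
    obtain ⟨a, b, rfl⟩ := hrS
    exact ⟨a, lt_of_le_of_lt (hp.self_le a b) hr⟩
  choose y hy using hy0
  have horb := fun k => ipr_orbit hp hcomp hα0 hα1 hcontr (y k)
  choose z hzconv hzdiagt hzinf using horb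
  have hzc : ∀ k, Tendsto (fun n => p (z k) (T^[n] (y k))) atTop (𝓝 (p (z k) (z k))) :=
    fun k => hzconv k
  have hzup : ∀ k, p (z k) (z k) < ρ + 1 / ((k:ℝ) + 1) := by
    intro k
    refine lt_of_le_of_lt ?_ (hy k)
    rw [hzinf k]
    exact (ciInf_le ⟨0, by rintro r ⟨n, rfl⟩; exact hp.nonneg _ _⟩ 0).trans (by simp)
  have hcross : ∀ j l, p (z j) (z l) ≤ max (p (y j) (y j)) (p (y l) (y l)) := by
    intro j l
    set M0 := max (p (y j) (y j)) (p (y l) (y l)) with hM0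
    have hub : ∀ n : ℕ, p (z j) (z l) ≤
        p (z j) (T^[n] (y j)) + (max (α ^ n * p (y j) (y l)) M0
          + (p (z l) (T^[n] (y l)) - p (T^[n] (y l)) (T^[n] (y l))))
          - p (T^[n] (y j)) (T^[n] (y j)) := by
      intro n
      have t1 := hp.triangle (z j) (T^[n] (y j)) (z l)
      have t2 := hp.triangle (T^[n] (y j)) (T^[n] (y l)) (z l)
      have hs := ipr_step hp hα0 hα1 hcontr n (y j) (y l)
      rw [hp.symm (T^[n] (y l)) (z l)] at t2
      rw [← hM0] at hs
      linarith
    have hlim : Tendsto (fun n => p (z j) (T^[n] (y j)) + (max (α ^ n * p (y j) (y l)) M0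
          + (p (z l) (T^[n] (y l)) - p (T^[n] (y l)) (T^[n] (y l))))
          - p (T^[n] (y j)) (T^[n] (y j))) atTop
        (𝓝 (p (z j) (z j) + (M0 + (p (z l) (z l) - p (z l) (z l))) - p (z j) (z j))) := by
      have hM00 : 0 ≤ M0 := le_max_of_le_left (hp.nonneg _ _)
      have h1 : Tendsto (fun n : ℕ => max (α ^ n * p (y j) (y l)) M0) atTop (𝓝 M0) := by
        have hz0 : Tendsto (fun n : ℕ => α ^ n * p (y j) (y l)) atTop (𝓝 0) := by
          simpa using (tendsto_pow_atTop_nhds_zero_of_lt_one hα0 hα1).mul_const (p (y j) (y l))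
        have hm := hz0.max (tendsto_const_nhds : Tendsto (fun _ : ℕ => M0) atTop (𝓝 M0))
        rwa [max_eq_right hM00] at hm
      exact ((hzc j).add (h1.add ((hzc l).sub (hzdiagt l)))).sub (hzdiagt j)
    have hfin := ge_of_tendsto hlim (Filter.Eventually.of_forall hub)
    linarith
  have hzcauchy : Tendsto (fun mn : ℕ × ℕ => p (z mn.1) (z mn.2)) atTop (𝓝 ρ) := by
    rw [Metric.tendsto_atTop]
    intro ε hε
    obtain ⟨N, hN⟩ := exists_nat_gt (1 / ε)
    refine ⟨(N, N), ?_⟩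
    rintro ⟨j, l⟩ hjl
    obtain ⟨h1, h2⟩ : N ≤ j ∧ N ≤ l := hjl
    have hsmall : ∀ k : ℕ, N ≤ k → p (y k) (y k) < ρ + ε := by
      intro k hk
      refine (hy k).trans_le ?_
      have hk1 : 1 / ε < (k:ℝ) + 1 := by
        refine hN.trans_le ?_
        have : (N:ℝ) ≤ k := by exact_mod_cast hk
        linarith
      have hkpos : (0:ℝ) < (k:ℝ) + 1 := by positivity
      have : 1 / ((k:ℝ) + 1) ≤ ε := by
        rw [div_le_iff₀ hkpos]
        rw [div_lt_iff₀ hε] at hk1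
        linarith [mul_comm ε ((k:ℝ)+1)]
      linarith
    have hup : p (z j) (z l) < ρ + ε := by
      refine (hcross j l).trans_lt (max_lt ?_ ?_)
      · exact hsmall j h1
      · exact hsmall l h2
    have hlow : ρ ≤ p (z j) (z l) := hρle _ _
    rw [Real.dist_eq, abs_lt]
    constructor <;> simp only [] <;> linarith
  obtain ⟨u, huconv, hudbl⟩ := hcomp z ⟨ρ, hzcauchy⟩
  have huu : p u u = ρ := tendsto_nhds_unique hudbl hzcauchy
  obtain ⟨w, hwfix, hww⟩ := ipr_fix hp hcomp hα0 hα1 hcontr hρ0 hρle huu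
  refine ⟨⟨w, hww⟩, w, hww, hwfix, ?_, ?_⟩
  · intro v hv hvfix
    have hv' : p v v = ρ := hv
    have h := hcontr v w
    rw [hvfix, hwfix, hv', hww, max_self] at h
    rcases le_or_gt (p v w) ρ with hle | hlt
    · have he : p v w = ρ := le_antisymm hle (hρle v w)
      exact hp.eq_of v w (by rw [hv', he]) (by rw [he, hww])
    · exfalso
      rcases le_max_iff.mp h with h' | h'
      · nlinarith [mul_pos (show (0:ℝ) < p v w by linarith) (show (0:ℝ) < 1 - α by linarith)]
      · linarith
  · intro x hx
    have hx' : p x x = ρ := hx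
    have hconv : Tendsto (fun n => p (T^[n] x) w) atTop (𝓝 ρ) :=
      ipr_conv hp hα0 hα1 hcontr hρ0 hρle hwfix hww hx'
    have hdiag : ∀ n, p (T^[n] x) (T^[n] x) = ρ := fun n =>
      le_antisymm (hx' ▸ ipr_diag_le hp hα0 hα1 hcontr n x) (hρle _ _)
    have ht : Tendsto (fun n => 2 * p (T^[n] x) w - p (T^[n] x) (T^[n] x) - p w w)
        atTop (𝓝 (2 * ρ - ρ - ρ)) := by
      simp only [hdiag, hww]
      exact ((hconv.const_mul 2).sub tendsto_const_nhds).sub tendsto_const_nhds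
    have he : 2 * ρ - ρ - ρ = 0 := by ring
    rwa [he] at ht
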